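/- Let f₁, …, fₙ be a path of irreducible morphisms X₀ → X₁ → ⋯ → Xₙ between indecomposable modules over a finite-dimensional algebra over a perfect field, and for each t let f′ₜ be the homogeneous modification of fₜ (with fₜ − f′ₜ ∈ rad²). Suppose there exists t ∈ {1,…,n} with d_ℓ(fₜ) ≤ t−1 and a morphism h ∈ rad^{t−1−d_ℓ(fₜ)}(X₀, Ker(f′ₜ)) \ rad^{t−d_ℓ(fₜ)} such that f₁⋯f_{t−1} − h∘i ∈ rad^t, where i : Ker(f′ₜ) → X_{t−1} is the inclusion. Then f₁⋯fₙ ∈ rad^{n+1}. -/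

import Mathlib

open CategoryTheory

/-- A morphism lies in the radical of `mod A`. -/
def InRad {A : Type*} [Ring A] {M N : ModuleCat A} (f : M ⟶ N) : Prop :=
  ∀ g : N ⟶ M, IsIso (𝟙 M - f ≫ g)

/-- Powers of the radical of the category of `A`-modules. -/
def RadPow (A : Type*) [Ring A] : ℕ → (M N : ModuleCat A) → AddSubgroup (M ⟶ N)
  | 0, _, _ => ⊤
  | n + 1, M, N => AddSubgroup.closure
      { f | ∃ (Z : ModuleCat A) (g : M ⟶ Z) (h : Z ⟶ N),
          g ∈ RadPow A n M Z ∧ InRad h ∧ f = g ≫ h }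

/-- An `A`-module is indecomposable. -/
def Indecomp (A : Type*) [Ring A] (M : ModuleCat A) : Prop :=
  (⊥ : Submodule A M) ≠ ⊤ ∧ ∀ p q : Submodule A M, IsCompl p q → p = ⊥ ∨ q = ⊥

def IsSec {A : Type*} [Ring A] {M N : ModuleCat A} (f : M ⟶ N) : Prop :=
  ∃ g : N ⟶ M, f ≫ g = 𝟙 M

def IsRetr {A : Type*} [Ring A] {M N : ModuleCat A} (f : M ⟶ N) : Prop :=
  ∃ g : N ⟶ M, g ≫ f = 𝟙 N

/-- Irreducible morphism. -/
def IrredHom {A : Type*} [Ring A] {M N : ModuleCat A} (f : M ⟶ N) : Prop :=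
  ¬ IsSec f ∧ ¬ IsRetr f ∧
    ∀ (Z : ModuleCat A) (u : M ⟶ Z) (v : Z ⟶ N), f = u ≫ v → IsSec u ∨ IsRetr v

/-- Witness that the left degree of the irreducible morphism `f` is at most `m` :
some `g : Z → M` from an indecomposable with `g ∈ rad^m \ rad^{m+1}` and
`g ≫ f ∈ rad^{m+2}`. -/
def LeftDegWitness {A : Type*} [Ring A] {M N : ModuleCat A} (f : M ⟶ N) (m : ℕ) : Prop :=
  ∃ (Z : ModuleCat A) (g : Z ⟶ M), Indecomp A Z ∧ g ∈ RadPow A m Z M ∧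
    g ∉ RadPow A (m + 1) Z M ∧ g ≫ f ∈ RadPow A (m + 2) Z N

/-- The left degree of the irreducible morphism `f` is finite. -/
def FiniteLeftDegree {A : Type*} [Ring A] {M N : ModuleCat A} (f : M ⟶ N) : Prop :=
  ∃ m, LeftDegWitness f m

/-- The left degree of the irreducible morphism `f` equals `n`. -/
def LeftDegreeIs {A : Type*} [Ring A] {M N : ModuleCat A} (f : M ⟶ N) (n : ℕ) : Prop :=
  LeftDegWitness f n ∧ ∀ m < n, ¬ LeftDegWitness f m

/-- Witness that the right degree of the irreducible morphism `f` is at most `m`. -/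
def RightDegWitness {A : Type*} [Ring A] {M N : ModuleCat A} (f : M ⟶ N) (m : ℕ) : Prop :=
  ∃ (Z : ModuleCat A) (g : N ⟶ Z), Indecomp A Z ∧ g ∈ RadPow A m N Z ∧
    g ∉ RadPow A (m + 1) N Z ∧ f ≫ g ∈ RadPow A (m + 2) M Z

/-- The right degree of the irreducible morphism `f` is finite. -/
def FiniteRightDegree {A : Type*} [Ring A] {M N : ModuleCat A} (f : M ⟶ N) : Prop :=
  ∃ m, RightDegWitness f m

/-- Composition `f₁ ⋯ f_m : X 0 ⟶ X m` of a chain of morphisms. -/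
def chainComp {A : Type*} [Ring A] (X : ℕ → ModuleCat A)
    (f : ∀ m, X m ⟶ X (m + 1)) : ∀ m, X 0 ⟶ X m
  | 0 => 𝟙 (X 0)
  | m + 1 => chainComp X f m ≫ f m

section Aux
variable {A : Type*} [Ring A]

lemma inRad_postcomp {M N P : ModuleCat A} {h : M ⟶ N} (hh : InRad h) (b : N ⟶ P) :
    InRad (h ≫ b) := fun g => by simpa [Category.assoc] using hh (b ≫ g)

lemma mem_radPow_top {M N : ModuleCat A} (f : M ⟶ N) : f ∈ RadPow A 0 M N := by
  show f ∈ (⊤ : AddSubgroup (M ⟶ N)); trivial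

lemma mem_radPow_one {M N : ModuleCat A} {f : M ⟶ N} (hf : InRad f) :
    f ∈ RadPow A 1 M N :=
  AddSubgroup.subset_closure ⟨M, 𝟙 M, f, mem_radPow_top _, hf, (Category.id_comp f).symm⟩

def postcompHom {M N P : ModuleCat A} (b : N ⟶ P) : (M ⟶ N) →+ (M ⟶ P) :=
  AddMonoidHom.mk' (fun f => f ≫ b) (fun f g => Preadditive.add_comp _ _ _ f g b)

def precompHom {M N P : ModuleCat A} (a : M ⟶ N) : (N ⟶ P) →+ (M ⟶ P) :=
  AddMonoidHom.mk' (fun f => a ≫ f) (fun f g => Preadditive.comp_add _ _ _ a f g)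

lemma radPow_postcomp {n : ℕ} {M N P : ModuleCat A} {f : M ⟶ N}
    (hf : f ∈ RadPow A n M N) (b : N ⟶ P) : f ≫ b ∈ RadPow A n M P := by
  cases n with
  | zero => exact mem_radPow_top _
  | succ m =>
    have : RadPow A (m+1) M N ≤ AddSubgroup.comap (postcompHom b) (RadPow A (m+1) M P) := by
      refine AddSubgroup.closure_le _ |>.2 ?_
      rintro x ⟨Z, g, h, hg, hh, rfl⟩
      exact AddSubgroup.subset_closure
        ⟨Z, g, h ≫ b, hg, inRad_postcomp hh b, (Category.assoc g h b).symm⟩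
    exact this hf

lemma radPow_comp : ∀ (p : ℕ) {m : ℕ} {M N P : ModuleCat A} {f : M ⟶ N}
    (_ : f ∈ RadPow A m M N) {g : N ⟶ P} (_ : g ∈ RadPow A p N P),
    f ≫ g ∈ RadPow A (m + p) M P := by
  intro p
  induction p with
  | zero => intro m M N P f hf g _; exact radPow_postcomp hf g
  | succ p ih =>
    intro m M N P f hf g hg
    have : RadPow A (p+1) N P ≤ AddSubgroup.comap (precompHom f) (RadPow A (m+p+1) M P) := by
      refine AddSubgroup.closure_le _ |>.2 ?_
      rintro x ⟨Z, u, h, hu, hh, rfl⟩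
      exact AddSubgroup.subset_closure
        ⟨Z, f ≫ u, h, ih hf hu, hh, (Category.assoc f u h)⟩
    exact this hg

lemma radPow_succ_le : ∀ (m : ℕ) {M N : ModuleCat A},
    RadPow A (m+1) M N ≤ RadPow A m M N := by
  intro m
  induction m with
  | zero => intro M N; exact le_top
  | succ m ih =>
    intro M N
    refine AddSubgroup.closure_le _ |>.2 ?_
    rintro x ⟨Z, g, h, hg, hh, rfl⟩
    exact AddSubgroup.subset_closure ⟨Z, g, h, ih hg, hh, rfl⟩

lemma radPow_le {a b : ℕ} (hab : a ≤ b) {M N : ModuleCat A} :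
    RadPow A b M N ≤ RadPow A a M N := by
  induction b with
  | zero => simpa [Nat.le_zero.mp hab] using le_rfl
  | succ b ih =>
    rcases Nat.lt_or_ge a (b+1) with hlt | hge
    · exact (radPow_succ_le b).trans (ih (Nat.lt_succ_iff.mp hlt))
    · have : a = b + 1 := le_antisymm hab hge
      subst this; exact le_rfl

end Aux

section IrredRad
variable {A : Type*} [Ring A]

lemma inRad_of_not_isSec (k : Type*) [Field k] [Algebra k A] [FiniteDimensional k A]
    {M N : ModuleCat A} (hM : Module.Finite A M)
    (hMind : Indecomp A M) {f : M ⟶ N} (hns : ¬ IsSec f) : InRad f := by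
  haveI : IsArtinianRing A := IsArtinianRing.of_finite k A
  haveI : IsNoetherianRing A := isNoetherian_of_tower k (inferInstance : IsNoetherian k A)
  haveI := hM
  intro g
  set φ : Module.End A M := (f ≫ g : M ⟶ M).hom with hφ
  obtain ⟨n₀, hn₀⟩ := Filter.eventually_atTop.mp
    (LinearMap.eventually_isCompl_ker_pow_range_pow φ)
  set n : ℕ := n₀ + 1 with hn
  have hc : IsCompl (LinearMap.ker (φ ^ n)) (LinearMap.range (φ ^ n)) :=
    hn₀ n (Nat.le_add_right _ _)
  rcases hMind.2 _ _ hc with hker | hrange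
  · -- φ is bijective, so f is a section: contradiction
    exfalso
    have hinj : Function.Injective (φ ^ n) := LinearMap.ker_eq_bot.mp hker
    have hsurj : Function.Surjective (φ ^ n) := by
      refine LinearMap.range_eq_top.mp ?_
      have := hc.sup_eq_top
      rwa [hker, bot_sup_eq] at this
    have hbij : Function.Bijective φ := by
      constructor
      · intro x y hxy
        apply hinj
        simp only [hn, pow_succ]
        simp [Module.End.mul_apply, hxy]
      · intro x
        obtain ⟨y, hy⟩ := hsurj x
        exact ⟨(φ ^ n₀) y, by simpa [hn, pow_succ'] using hy⟩
    have hu : IsUnit φ := (Module.End.isUnit_iff φ).mpr hbij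
    refine hns ⟨g ≫ ModuleCat.ofHom (↑hu.unit⁻¹ : Module.End A M), ?_⟩
    apply ModuleCat.hom_ext
    show ((↑hu.unit⁻¹ : Module.End A M) * φ : Module.End A M) = ModuleCat.Hom.hom (𝟙 M)
    exact (IsUnit.val_inv_mul hu).trans rfl
  · -- φ is nilpotent, so 1 - φ is a unit
    have hnil : IsNilpotent φ := ⟨n, LinearMap.range_eq_bot.mp hrange⟩
    have hu : IsUnit (1 - φ) := hnil.isUnit_one_sub
    refine ⟨ModuleCat.ofHom (↑hu.unit⁻¹ : Module.End A M), ?_, ?_⟩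
    · apply ModuleCat.hom_ext
      show ((↑hu.unit⁻¹ : Module.End A M) * (1 - φ) : Module.End A M) = ModuleCat.Hom.hom (𝟙 M)
      exact (IsUnit.val_inv_mul hu).trans rfl
    · apply ModuleCat.hom_ext
      show ((1 - φ) * (↑hu.unit⁻¹ : Module.End A M) : Module.End A M) = ModuleCat.Hom.hom (𝟙 M)
      exact (IsUnit.mul_val_inv hu).trans rfl

end IrredRad

/-- Let `f₁, …, fₙ` be a path of irreducible morphisms between
indecomposable modules and `f′ₜ` a modification of `fₜ` with `fₜ − f′ₜ ∈ rad²`.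
If `d_ℓ(fₜ) ≤ t−1` and some `h ∈ rad^{t−1−d}(X₀, Ker f′ₜ) \ rad^{t−d}` satisfies
`f₁⋯f_{t−1} − h∘i ∈ rad^t` (`i` the kernel inclusion), then `f₁⋯fₙ ∈ rad^{n+1}`. -/
theorem stmt17 {k : Type*} [Field k] [PerfectField k]
    {A : Type*} [Ring A] [Algebra k A] [FiniteDimensional k A]
    (n t d : ℕ) (ht1 : 1 ≤ t) (htn : t ≤ n)
    (X : ℕ → ModuleCat A) (f : ∀ m, X m ⟶ X (m + 1))
    (hmod : ∀ m ≤ n, Module.Finite A (X m))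
    (hind : ∀ m ≤ n, Indecomp A (X m))
    (hirr : ∀ m < n, IrredHom (f m))
    (hd : LeftDegreeIs (f (t - 1)) d) (hdt : d ≤ t - 1)
    (f' : X (t - 1) ⟶ X (t - 1 + 1))
    (hf' : f (t - 1) - f' ∈ RadPow A 2 (X (t - 1)) (X (t - 1 + 1)))
    (i : ModuleCat.of A (LinearMap.ker f'.hom) ⟶ X (t - 1))
    (hi : i = ModuleCat.ofHom (LinearMap.ker f'.hom).subtype)
    (h : X 0 ⟶ ModuleCat.of A (LinearMap.ker f'.hom))
    (hh : h ∈ RadPow A (t - 1 - d) (X 0) (ModuleCat.of A (LinearMap.ker f'.hom)))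
    (hh' : h ∉ RadPow A (t - d) (X 0) (ModuleCat.of A (LinearMap.ker f'.hom)))
    (hcomp : chainComp X f (t - 1) - h ≫ i ∈ RadPow A t (X 0) (X (t - 1))) :
    chainComp X f n ∈ RadPow A (n + 1) (X 0) (X n) := by
  

  obtain ⟨s, rfl⟩ : ∃ s, t = s + 1 := ⟨t - 1, (Nat.succ_pred_eq_of_pos ht1).symm⟩
  have e0 : s + 1 - 1 = s := by omega
  revert hd hdt f'
  rw [e0]
  intro hd hdt f' hf' i hi h hh hh' hcomp
  have hrad : ∀ m, m < n → InRad (f m) := fun m hm =>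
    inRad_of_not_isSec k (hmod m hm.le) (hind m hm.le) (hirr m hm).1
  have hchain : ∀ m, m ≤ n → chainComp X f m ∈ RadPow A m (X 0) (X m) := by
    intro m
    induction m with
    | zero => intro _; exact mem_radPow_top _
    | succ m ih =>
      intro hmn
      exact radPow_comp 1 (ih (Nat.le_of_succ_le hmn)) (mem_radPow_one (hrad m hmn))
  have hs_le : s ≤ n := le_trans (Nat.le_succ s) htn
  have hsn : s < n := htn
  have hw : chainComp X f s - h ≫ i ∈ RadPow A (s+1) (X 0) (X s) := hcomp
  have hhi : h ≫ i ∈ RadPow A s (X 0) (X s) := by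
    have h1 : chainComp X f s ∈ RadPow A s (X 0) (X s) := hchain s hs_le
    have h2 := radPow_le (Nat.le_succ s) hw
    have e : h ≫ i = chainComp X f s - (chainComp X f s - h ≫ i) := by abel
    rw [e]
    exact AddSubgroup.sub_mem _ h1 h2
  have hif' : i ≫ f' = 0 := by
    rw [hi]
    apply ModuleCat.hom_ext
    apply LinearMap.ext
    intro x
    exact LinearMap.mem_ker.mp x.2
  have hdecomp : chainComp X f (s+1) =
      (chainComp X f s - h ≫ i) ≫ f s + (h ≫ i) ≫ (f s - f') := by
    have e : chainComp X f (s+1) = chainComp X f s ≫ f s := rfl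
    rw [e]
    simp only [Preadditive.sub_comp, Preadditive.comp_sub, Category.assoc, hif',
      Limits.comp_zero, sub_zero]
    abel
  have hct : chainComp X f (s+1) ∈ RadPow A (s+2) (X 0) (X (s+1)) := by
    rw [hdecomp]
    refine AddSubgroup.add_mem _ ?_ ?_
    · exact radPow_comp 1 hw (mem_radPow_one (hrad s hsn))
    · exact radPow_comp 2 hhi hf'
  have hfinal : ∀ m, s + 1 ≤ m → m ≤ n → chainComp X f m ∈ RadPow A (m+1) (X 0) (X m) := by
    intro m hm
    induction m, hm using Nat.le_induction with
    | base => intro _; exact hct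
    | succ m hm ih =>
      intro hmn
      exact radPow_comp 1 (ih (Nat.le_of_succ_le hmn)) (mem_radPow_one (hrad m hmn))
  exact hfinal n htn le_rfl
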